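/- For every integer n ≥ 1 and all real numbers b > 0 and c > 0, there exists a real number λ > 0 such that for all real numbers E and H with E ≥ 2c, H > 0, and H ≤ b · E^{1/n} · log(E/c), one has E ≥ λ · Hⁿ / (log(1 + H))ⁿ. -/

import Mathlib

theorem isoembolic_entropy_inversion (n : ℕ) (hn : 1 ≤ n) (b c : ℝ) (hb : 0 < b) (hc : 0 < c) :
    ∃ lam : ℝ, 0 < lam ∧ ∀ E H : ℝ, 2 * c ≤ E → 0 < H →
      H ≤ b * E ^ ((1 : ℝ) / n) * Real.log (E / c) →
      lam * H ^ n / (Real.log (1 + H)) ^ n ≤ E := by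
  have hn0 : (0:ℝ) < (n:ℝ) := by exact_mod_cast Nat.lt_of_lt_of_le Nat.zero_lt_one hn
  refine ⟨min (c / 2 ^ n) (1 / (2 * n * b) ^ n), ?_, ?_⟩
  · refine lt_min (by positivity) (by positivity)
  intro E H hE hH hHle
  have hEpos : 0 < E := lt_of_lt_of_le (by positivity) hE
  have hEc : (2:ℝ) ≤ E / c := (le_div_iff₀ hc).mpr (by linarith)
  have hEc0 : (0:ℝ) < E / c := by positivity
  have hLpos : 0 < Real.log (E / c) := Real.log_pos (by linarith)
  have hlog1H : 0 < Real.log (1 + H) := Real.log_pos (by linarith)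
  set L := Real.log (E / c) with hLdef
  set A := (E / c) ^ ((1:ℝ) / (2 * n)) with hAdef
  have hApos : 0 < A := Real.rpow_pos_of_pos hEc0 _
  have hA1 : (1:ℝ) ≤ A := Real.one_le_rpow (by linarith) (by positivity)
  have hAn : A ^ n = Real.sqrt (E / c) := by
    rw [hAdef, ← Real.rpow_natCast (_ ^ _) n, ← Real.rpow_mul hEc0.le,
      Real.sqrt_eq_rpow]
    congr 1
    field_simp
  have hlogpow : 0 < Real.log (1 + H) ^ n := pow_pos hlog1H n
  rcases le_total H A with hB | hA
  · -- small H case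
    have h1H : 1 + H ≤ 2 * A := by linarith
    have hpos1H : (0:ℝ) < 1 + H := by linarith
    have hHdiv : H / Real.log (1 + H) ≤ 1 + H := by
      rw [div_le_iff₀ hlog1H]
      have h1 := Real.log_le_sub_one_of_pos (show (0:ℝ) < 1 / (1 + H) by positivity)
      rw [Real.log_div one_ne_zero (ne_of_gt hpos1H), Real.log_one] at h1
      have h3 : (1 - 1 / (1 + H)) * (1 + H) = H := by field_simp; ring
      nlinarith [mul_le_mul_of_nonneg_right
        (by linarith : 1 - 1 / (1 + H) ≤ Real.log (1 + H)) hpos1H.le]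
    have key : (H / Real.log (1 + H)) ^ n ≤ 2 ^ n * Real.sqrt (E / c) := by
      calc (H / Real.log (1 + H)) ^ n ≤ (2 * A) ^ n := by
            apply pow_le_pow_left₀ (by positivity) (le_trans hHdiv h1H)
        _ = 2 ^ n * A ^ n := by rw [mul_pow]
        _ = 2 ^ n * Real.sqrt (E / c) := by rw [hAn]
    have hsq : c * Real.sqrt (E / c) ≤ E := by
      have hs1 : (1:ℝ) ≤ Real.sqrt (E / c) := Real.one_le_sqrt.mpr (by linarith)
      have hs2 : Real.sqrt (E / c) ^ 2 = E / c := Real.sq_sqrt hEc0.le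
      have h1 : Real.sqrt (E / c) ≤ E / c := by nlinarith
      calc c * Real.sqrt (E / c) ≤ c * (E / c) := by nlinarith
        _ = E := by field_simp
    calc min (c / 2 ^ n) (1 / (2 * n * b) ^ n) * H ^ n / Real.log (1 + H) ^ n
        = min (c / 2 ^ n) (1 / (2 * n * b) ^ n) * (H / Real.log (1 + H)) ^ n := by
          rw [div_pow]; ring
      _ ≤ (c / 2 ^ n) * (2 ^ n * Real.sqrt (E / c)) := by
          apply mul_le_mul (min_le_left _ _) key (by positivity) (by positivity)
      _ = c * Real.sqrt (E / c) := by field_simp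
      _ ≤ E := hsq
  · -- large H case
    rw [div_le_iff₀ hlogpow]
    have hlogA : (1 / (2 * n)) * L ≤ Real.log (1 + H) := by
      rw [← Real.log_rpow hEc0]
      exact Real.log_le_log hApos (by linarith)
    have hHn : H ^ n ≤ b ^ n * E * L ^ n := by
      have h1 : H ^ n ≤ (b * E ^ ((1:ℝ)/n) * L) ^ n :=
        pow_le_pow_left₀ hH.le hHle n
      have h2 : (E ^ ((1:ℝ)/n)) ^ n = E := by
        rw [← Real.rpow_natCast (E ^ ((1:ℝ)/n)) n, ← Real.rpow_mul hEpos.le]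
        rw [one_div, inv_mul_cancel₀ (by positivity), Real.rpow_one]
      calc H ^ n ≤ (b * E ^ ((1:ℝ)/n) * L) ^ n := h1
        _ = b ^ n * (E ^ ((1:ℝ)/n)) ^ n * L ^ n := by ring
        _ = b ^ n * E * L ^ n := by rw [h2]
    have hlogpow2 : ((1 / (2 * n)) * L) ^ n ≤ Real.log (1 + H) ^ n :=
      pow_le_pow_left₀ (by positivity) hlogA n
    calc min (c / 2 ^ n) (1 / (2 * n * b) ^ n) * H ^ n
        ≤ (1 / (2 * n * b) ^ n) * (b ^ n * E * L ^ n) := by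
          apply mul_le_mul (min_le_right _ _) hHn (by positivity) (by positivity)
      _ = E * ((1 / (2 * n)) * L) ^ n := by
          rw [mul_pow, mul_pow, mul_pow, div_pow, one_pow]
          field_simp
          ring
      _ ≤ E * Real.log (1 + H) ^ n := by
          apply mul_le_mul_of_nonneg_left hlogpow2 hEpos.le
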